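/- Let F : ℝⁿ → ℝ be convex and differentiable, χ : ℝⁿ → ℝ convex, and C ⊆ ℝⁿ a convex set. Let u, u* ∈ ℝⁿ, and suppose G is a symmetric n×n matrix with ∇F(u) − ∇F(u*) = G(u − u*) and m‖x‖² ≤ xᵀ G x ≤ M‖x‖² for all x ∈ ℝⁿ, where 0 < m ≤ M. Assume u* minimizes F + χ over C, set t = 2/(m + M), and let u⁺ minimize z ↦ (1/(2t))‖z − (u − t∇F(u))‖² + χ(z) over C. Then the proximal gradient step contracts with factor governed by the condition number κ_G = M/m of G: ‖u⁺ − u*‖ ≤ ((M − m)/(M + m)) ‖u − u*‖ = (|1 − κ_G|/(1 + κ_G)) ‖u − u*‖, where ‖·‖ is the Euclidean norm on ℝⁿ. -/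

import Mathlib

open Matrix

private lemma limit_aux' {a b : ℝ} (h : ∀ l : ℝ, 0 < l → l ≤ 1 → 0 ≤ a + l * b) : 0 ≤ a := by
  by_contra ha
  push_neg at ha
  rcases le_or_gt b 0 with hb | hb
  · have := h 1 one_pos le_rfl
    nlinarith
  · have hpos : (0:ℝ) < -a / (2 * b) := div_pos (by linarith) (by linarith)
    have hl1 : (0:ℝ) < min 1 (-a/(2*b)) := lt_min one_pos hpos
    have h2 := h _ hl1 (min_le_left _ _)
    have hle : min 1 (-a/(2*b)) * b ≤ (-a/(2*b)) * b :=
      mul_le_mul_of_nonneg_right (min_le_right _ _) hb.le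
    have heq : -a/(2*b)*b = -a/2 := by
      field_simp
    nlinarith


private lemma quad_bound {n : ℕ} (t c m M : ℝ) (hm : 0 < m) (hmM : m ≤ M)
    (ht : t = 2/(m+M)) (hceq : c = (M-m)/(M+m))
    (T : EuclideanSpace ℝ (Fin n) →ₗ[ℝ] EuclideanSpace ℝ (Fin n))
    (hlow : ∀ x : EuclideanSpace ℝ (Fin n), m * ‖x‖ ^ 2 ≤ inner ℝ x (T x))
    (hhigh : ∀ x : EuclideanSpace ℝ (Fin n), (inner ℝ x (T x) : ℝ) ≤ M * ‖x‖ ^ 2) :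
    ∀ z : EuclideanSpace ℝ (Fin n),
      -(c * ‖z‖^2) ≤ (inner ℝ z (z - t • T z) : ℝ) ∧ (inner ℝ z (z - t • T z) : ℝ) ≤ c * ‖z‖^2 := by
  intro z
  have e : (inner ℝ z (z - t • T z) : ℝ) = ‖z‖^2 - t * (inner ℝ z (T z) : ℝ) := by
    simp only [inner_sub_right, real_inner_smul_right]
    rw [real_inner_self_eq_norm_sq]
  have h1 := hlow z
  have h2 := hhigh z
  rw [e]
  have hne1 : (m + M) ≠ 0 := by linarith
  have hne2 : (M + m) ≠ 0 := by linarith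
  have htm : t * (m + M) = 2 := by rw [ht]; field_simp
  have hcm : c * (M + m) = M - m := by rw [hceq]; field_simp
  set ip : ℝ := (inner ℝ z (T z) : ℝ) with hip
  clear_value ip
  set nz : ℝ := ‖z‖^2 with hnz
  have hnz0 : 0 ≤ nz := by rw [hnz]; positivity
  clear_value nz
  constructor
  · have hmul : 0 ≤ (m + M) * ((nz - t * ip) + c * nz) := by
      have e2 : (m + M) * ((nz - t * ip) + c * nz)
          = (m + M) * nz - (t * (m+M)) * ip + (c * (M+m)) * nz := by ring
      rw [e2, htm, hcm]
      nlinarith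
    nlinarith
  · have hmul : 0 ≤ (m + M) * (c * nz - (nz - t * ip)) := by
      have e2 : (m + M) * (c * nz - (nz - t * ip))
          = (c * (M+m)) * nz - (m + M) * nz + (t * (m+M)) * ip := by ring
      rw [e2, htm, hcm]
      nlinarith
    nlinarith

private lemma sym_contract {n : ℕ} (t c : ℝ) (hc0 : 0 ≤ c)
    (T : EuclideanSpace ℝ (Fin n) →ₗ[ℝ] EuclideanSpace ℝ (Fin n))
    (hTsymm : T.IsSymmetric)
    (hq : ∀ z : EuclideanSpace ℝ (Fin n),
      -(c * ‖z‖^2) ≤ (inner ℝ z (z - t • T z) : ℝ) ∧ (inner ℝ z (z - t • T z) : ℝ) ≤ c * ‖z‖^2)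
    (x y : EuclideanSpace ℝ (Fin n))
    (key : ‖y‖^2 ≤ (inner ℝ (x - t • T x) y : ℝ)) :
    ‖y‖ ≤ c * ‖x‖ := by
  have hAsymm : ∀ p q : EuclideanSpace ℝ (Fin n),
      (inner ℝ (p - t • T p) q : ℝ) = (inner ℝ p (q - t • T q) : ℝ) := by
    intro p q
    simp only [inner_sub_left, inner_sub_right, real_inner_smul_left, real_inner_smul_right]
    rw [hTsymm p q]
  have hhalf : ∀ p q : EuclideanSpace ℝ (Fin n),
      (inner ℝ (p - t • T p) q : ℝ) ≤ (c/2) * (‖p‖^2 + ‖q‖^2) := by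
    intro p q
    have hpq1 := (hq (p + q)).2
    have hpq2 := (hq (p - q)).1
    have hsw : (inner ℝ q (p - t • T p) : ℝ) = (inner ℝ p (q - t • T q) : ℝ) := by
      rw [real_inner_comm, hAsymm p q]
    have genadd : ∀ X Y : EuclideanSpace ℝ (Fin n),
        (inner ℝ (p + q) (X + Y) : ℝ)
          = (inner ℝ p X : ℝ) + inner ℝ p Y + inner ℝ q X + inner ℝ q Y := by
      intro X Y
      rw [inner_add_left, inner_add_right, inner_add_right]
      ring
    have gensub : ∀ X Y : EuclideanSpace ℝ (Fin n),
        (inner ℝ (p - q) (X - Y) : ℝ)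
          = (inner ℝ p X : ℝ) - inner ℝ p Y - inner ℝ q X + inner ℝ q Y := by
      intro X Y
      rw [inner_sub_left, inner_sub_right, inner_sub_right]
      ring
    have e1 : (inner ℝ (p+q) ((p+q) - t • T (p+q)) : ℝ)
        = (inner ℝ p (p - t • T p) : ℝ) + (inner ℝ q (q - t • T q) : ℝ)
          + 2 * (inner ℝ (p - t • T p) q : ℝ) := by
      have hTl : T (p + q) = T p + T q := map_add T p q
      have h1 : (p + q) - t • (T p + T q) = (p - t • T p) + (q - t • T q) := by
        rw [smul_add]; abel
      rw [hTl, h1, genadd, real_inner_comm (p - t • T p) q, ← hAsymm p q]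
      ring
    have e2 : (inner ℝ (p-q) ((p-q) - t • T (p-q)) : ℝ)
        = (inner ℝ p (p - t • T p) : ℝ) + (inner ℝ q (q - t • T q) : ℝ)
          - 2 * (inner ℝ (p - t • T p) q : ℝ) := by
      have hTl : T (p - q) = T p - T q := map_sub T p q
      have h1 : (p - q) - t • (T p - T q) = (p - t • T p) - (q - t • T q) := by
        rw [smul_sub]; abel
      rw [hTl, h1, gensub, real_inner_comm (p - t • T p) q, ← hAsymm p q]
      ring
    have hpar : ‖p + q‖^2 + ‖p - q‖^2 = 2 * (‖p‖^2 + ‖q‖^2) := by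
      rw [norm_add_sq_real, norm_sub_sq_real]; ring
    nlinarith
  rcases eq_or_ne y 0 with h0 | h0
  · rw [h0, norm_zero]
    positivity
  rcases eq_or_ne x 0 with hx0 | hx0
  · exfalso
    have hz : (inner ℝ (x - t • T x) y : ℝ) = 0 := by
      rw [hx0, map_zero, smul_zero, sub_zero, inner_zero_left]
    rw [hz] at key
    have : ‖y‖ = 0 := by nlinarith [norm_nonneg y]
    exact h0 (norm_eq_zero.mp this)
  have hxpos : 0 < ‖x‖ := norm_pos_iff.mpr hx0
  have hypos : 0 < ‖y‖ := norm_pos_iff.mpr h0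
  set s : ℝ := Real.sqrt (‖y‖ / ‖x‖) with hs
  have hspos : 0 < s := Real.sqrt_pos.mpr (by positivity)
  have hs2 : s^2 = ‖y‖ / ‖x‖ := Real.sq_sqrt (by positivity)
  clear_value s
  have hscale : (inner ℝ (x - t • T x) y : ℝ)
      = (inner ℝ ((s • x) - t • T (s • x)) (s⁻¹ • y) : ℝ) := by
    have hTs : T (s • x) = s • T x := map_smul T s x
    have h1 : s • x - t • s • T x = s • (x - t • T x) := by
      rw [smul_sub, smul_comm]
    rw [hTs, h1, real_inner_smul_left, real_inner_smul_right]
    rw [← mul_assoc, mul_inv_cancel₀ hspos.ne', one_mul]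
  have hbd := hhalf (s • x) (s⁻¹ • y)
  rw [← hscale] at hbd
  have hns : ‖s • x‖^2 = s^2 * ‖x‖^2 := by
    rw [norm_smul, Real.norm_eq_abs, mul_pow, sq_abs]
  have hns2 : ‖s⁻¹ • y‖^2 = (s^2)⁻¹ * ‖y‖^2 := by
    rw [norm_smul, Real.norm_eq_abs, mul_pow, sq_abs, inv_pow]
  rw [hns, hns2, hs2] at hbd
  have hfin : (inner ℝ (x - t • T x) y : ℝ) ≤ c * (‖x‖ * ‖y‖) := by
    have hxne : ‖x‖ ≠ 0 := hxpos.ne'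
    have hyne : ‖y‖ ≠ 0 := hypos.ne'
    have e : (c/2) * ((‖y‖/‖x‖) * ‖x‖^2 + (‖y‖/‖x‖)⁻¹ * ‖y‖^2) = c * (‖x‖ * ‖y‖) := by
      rw [inv_div]
      field_simp
      ring
    rw [e] at hbd
    exact hbd
  have hfinal : ‖y‖^2 ≤ c * (‖x‖ * ‖y‖) := le_trans key hfin
  nlinarith [hfinal, hypos]

/-- Linear contraction of the proximal gradient step, with rate governed by the condition
number `κ_G = M/m` of `G`. Let `F` be convex and differentiable, `χ` convex, `C` convex.
Suppose `G` is symmetric with `∇F(u) − ∇F(u*) = G(u − u*)` and `m‖x‖² ≤ xᵀGx ≤ M‖x‖²`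
for all `x`, `0 < m ≤ M`. If `u*` minimizes `F + χ` over `C`, `t = 2/(m+M)`, and `u⁺`
minimizes `z ↦ (1/(2t))‖z − (u − t∇F(u))‖² + χ(z)` over `C`, then
`‖u⁺ − u*‖ ≤ ((M − m)/(M + m))‖u − u*‖` in the Euclidean norm. -/
theorem prox_gradient_linear_contraction (n : ℕ)
    (F : EuclideanSpace ℝ (Fin n) → ℝ)
    (hF : ConvexOn ℝ Set.univ F) (hFdiff : Differentiable ℝ F)
    (χ : EuclideanSpace ℝ (Fin n) → ℝ) (hχ : ConvexOn ℝ Set.univ χ)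
    (C : Set (EuclideanSpace ℝ (Fin n))) (hC : Convex ℝ C)
    (u ustar : EuclideanSpace ℝ (Fin n))
    (G : Matrix (Fin n) (Fin n) ℝ) (hGsymm : G.IsSymm)
    (hGrad : gradient F u - gradient F ustar = Matrix.toEuclideanLin G (u - ustar))
    (m M : ℝ) (hm : 0 < m) (hmM : m ≤ M)
    (hlow : ∀ x : EuclideanSpace ℝ (Fin n),
      m * ‖x‖ ^ 2 ≤ inner ℝ x (Matrix.toEuclideanLin G x))
    (hhigh : ∀ x : EuclideanSpace ℝ (Fin n),
      (inner ℝ x (Matrix.toEuclideanLin G x) : ℝ) ≤ M * ‖x‖ ^ 2)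
    (hustarC : ustar ∈ C)
    (hustar : ∀ z ∈ C, F ustar + χ ustar ≤ F z + χ z)
    (uplus : EuclideanSpace ℝ (Fin n)) (huplusC : uplus ∈ C)
    (huplus : ∀ z ∈ C,
      (1 / (2 * (2 / (m + M)))) *
          ‖uplus - (u - (2 / (m + M)) • gradient F u)‖ ^ 2 + χ uplus ≤
        (1 / (2 * (2 / (m + M)))) *
          ‖z - (u - (2 / (m + M)) • gradient F u)‖ ^ 2 + χ z) :
    ‖uplus - ustar‖ ≤ (M - m) / (M + m) * ‖u - ustar‖ := by
  have hmMpos : (0:ℝ) < m + M := by linarith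
  obtain ⟨t, ht, ht0⟩ : ∃ t : ℝ, t = 2 / (m + M) ∧ 0 < t :=
    ⟨2 / (m + M), rfl, by positivity⟩
  rw [← ht] at huplus
  obtain ⟨c, hceq, hc0⟩ : ∃ c : ℝ, c = (M - m) / (M + m) ∧ 0 ≤ c :=
    ⟨(M - m) / (M + m), rfl, div_nonneg (by linarith) (by linarith)⟩
  rw [← hceq]
  set T := Matrix.toEuclideanLin G with hT
  have hTsymm : T.IsSymmetric := Matrix.isHermitian_iff_isSymmetric.mp hGsymm
  set v : EuclideanSpace ℝ (Fin n) := u - t • gradient F u with hv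
  -- convex combination helper
  have hcomb : ∀ (p z : EuclideanSpace ℝ (Fin n)) (l : ℝ),
      p + l • (z - p) = (1 - l) • p + l • z := by
    intro p z l
    rw [smul_sub, sub_smul, one_smul]
    abel
  have hmemC : ∀ (p z : EuclideanSpace ℝ (Fin n)), p ∈ C → z ∈ C →
      ∀ l : ℝ, 0 < l → l ≤ 1 → p + l • (z - p) ∈ C := by
    intro p z hp hz l hl hl1
    rw [hcomb]
    exact hC hp hz (by linarith) hl.le (by ring)
  have hχconv : ∀ (p z : EuclideanSpace ℝ (Fin n)) (l : ℝ), 0 < l → l ≤ 1 →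
      χ (p + l • (z - p)) ≤ (1 - l) * χ p + l * χ z := by
    intro p z l hl hl1
    rw [hcomb]
    exact hχ.2 (Set.mem_univ p) (Set.mem_univ z) (by linarith) hl.le (by ring)
  -- Variational inequality for uplus
  have VI1 : ∀ z ∈ C, 0 ≤ (inner ℝ (uplus - v) (z - uplus) : ℝ) + t * (χ z - χ uplus) := by
    intro z hz
    apply limit_aux' (b := (1/2) * ‖z - uplus‖^2)
    intro l hl hl1
    have hmem := hmemC uplus z huplusC hz l hl hl1
    have h1 := huplus _ hmem
    have hexp : ‖uplus + l • (z - uplus) - v‖^2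
        = ‖uplus - v‖^2 + 2 * (l * (inner ℝ (uplus - v) (z - uplus) : ℝ))
          + l^2 * ‖z - uplus‖^2 := by
      have hre : uplus + l • (z - uplus) - v = (uplus - v) + l • (z - uplus) := by abel
      rw [hre, norm_add_sq_real, real_inner_smul_right, norm_smul, Real.norm_eq_abs,
        mul_pow, sq_abs]
      try ring
    have hχ2 := hχconv uplus z l hl hl1
    rw [hexp] at h1
    -- make everything scalar
    set a1 : ℝ := (inner ℝ (uplus - v) (z - uplus) : ℝ) with ha1
    clear_value a1
    set nd : ℝ := ‖z - uplus‖^2 with hnd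
    have hnd0 : 0 ≤ nd := by rw [hnd]; positivity
    clear_value nd
    set c1 : ℝ := χ uplus
    clear_value c1
    set c2 : ℝ := χ z
    clear_value c2
    set cw : ℝ := χ (uplus + l • (z - uplus))
    clear_value cw
    set fq : ℝ := ‖uplus - v‖^2
    clear_value fq
    -- h1 : 1/(2t) fq + c1 ≤ 1/(2t)(fq + 2 l a1 + l² nd) + cw
    have hstep : 0 ≤ l * ((a1 + t * (c2 - c1)) + l * ((1/2) * nd)) := by
      have htne : t ≠ 0 := ht0.ne'
      have h3 : 0 ≤ 1/(2*t) * (2*(l*a1) + l^2*nd) + l*(c2 - c1) := by linarith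
      have h4 : 0 ≤ t * (1/(2*t) * (2*(l*a1) + l^2*nd) + l*(c2-c1)) := mul_nonneg ht0.le h3
      have h5 : t * (1/(2*t) * (2*(l*a1) + l^2*nd) + l*(c2-c1))
          = l * ((a1 + t * (c2 - c1)) + l * ((1/2) * nd)) := by
        field_simp
        ring
      linarith
    exact (mul_nonneg_iff_of_pos_left hl).mp hstep
  -- Variational inequality for ustar
  have VI2 : ∀ z ∈ C, 0 ≤ (inner ℝ (gradient F ustar) (z - ustar) : ℝ) + (χ z - χ ustar) := by
    intro z hz
    set d := z - ustar with hd
    have hline : HasDerivAt (fun l : ℝ => ustar + l • d) d 0 := by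
      simpa using ((hasDerivAt_id (0:ℝ)).smul_const d).const_add ustar
    have hfd : HasFDerivAt F (InnerProductSpace.toDual ℝ _ (gradient F ustar)) ustar :=
      (hFdiff ustar).hasGradientAt.hasFDerivAt
    have hfd' : HasFDerivAt F (InnerProductSpace.toDual ℝ _ (gradient F ustar))
        ((fun l : ℝ => ustar + l • d) 0) := by simpa using hfd
    have hF' : HasDerivAt (fun l : ℝ => F (ustar + l • d))
        ((inner ℝ (gradient F ustar) d : ℝ)) 0 := by
      have := hfd'.comp_hasDerivAt 0 hline
      rw [InnerProductSpace.toDual_apply_apply] at this; exact this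
    rw [hasDerivAt_iff_tendsto_slope] at hF'
    have hsub : Set.Ioi (0:ℝ) ⊆ {(0:ℝ)}ᶜ := fun x hx => by
      simp only [Set.mem_compl_iff, Set.mem_singleton_iff]
      exact ne_of_gt hx
    have htend := hF'.mono_left (nhdsWithin_mono 0 hsub)
    have hslope : ∀ᶠ l in nhdsWithin 0 (Set.Ioi 0),
        -(χ z - χ ustar) ≤ slope (fun l : ℝ => F (ustar + l • d)) 0 l := by
      filter_upwards [Ioc_mem_nhdsGT_of_mem (Set.left_mem_Ico.mpr one_pos)] with l hl
      obtain ⟨hl0, hl1⟩ := hl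
      have hmem := hmemC ustar z hustarC hz l hl0 hl1
      have h1 := hustar _ hmem
      have hχ2 := hχconv ustar z l hl0 hl1
      rw [slope_def_field]
      simp only [sub_zero, zero_smul, add_zero]
      rw [le_div_iff₀ hl0]
      nlinarith
    have := ge_of_tendsto htend hslope
    linarith
  -- Combine the two VIs
  set x : EuclideanSpace ℝ (Fin n) := u - ustar with hx
  set y : EuclideanSpace ℝ (Fin n) := uplus - ustar with hy
  have hA := VI1 ustar hustarC
  have hB := VI2 uplus huplusC
  have key : ‖y‖^2 ≤ (inner ℝ (x - t • T x) y : ℝ) := by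
    have e1 : (inner ℝ (uplus - v) (ustar - uplus) : ℝ)
        = -‖y‖^2 + (inner ℝ x y : ℝ) - t * (inner ℝ (T x) y : ℝ)
          - t * (inner ℝ (gradient F ustar) (uplus - ustar) : ℝ) := by
      have hvv : uplus - v = y - x + t • (T x) + t • gradient F ustar := by
        have hg : gradient F u = T x + gradient F ustar := by
          rw [← hGrad]; abel
        rw [hv, hg, hy, hx]
        simp only [smul_add]
        abel
      have hmu : ustar - uplus = -y := by rw [hy]; abel
      rw [hvv, hmu]
      simp only [inner_add_left, inner_sub_left, inner_neg_right, real_inner_smul_left]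
      rw [real_inner_self_eq_norm_sq]
      ring
    rw [e1] at hA
    have e2 : (inner ℝ (x - t • T x) y : ℝ) = (inner ℝ x y : ℝ) - t * (inner ℝ (T x) y : ℝ) := by
      simp only [inner_sub_left, real_inner_smul_left]
    rw [e2]
    nlinarith [mul_le_mul_of_nonneg_left hB ht0.le]
  -- quadratic form bound and conclusion via the auxiliary lemmas
  have hq := quad_bound t c m M hm hmM ht hceq T hlow hhigh
  exact sym_contract t c hc0 T hTsymm hq x y key
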